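/- For every κ ≥ 0, real numbers a, b with |b − a| ≤ κ·ρ and 0 < ρ ≤ s, one has cosh((b−a)/2) − 1 ≤ (ρ²/s²)·(cosh(κs/2) − 1). -/

import Mathlib

open Real

lemma sinh_nonneg' {x : ℝ} (hx : 0 ≤ x) : 0 ≤ Real.sinh x := by
  simpa using Real.sinh_le_sinh.2 hx

lemma sinh_convexOn : ConvexOn ℝ (Set.Ici (0:ℝ)) Real.sinh := by
  apply convexOn_of_deriv2_nonneg (convex_Ici 0) Real.continuous_sinh.continuousOn
    Real.differentiable_sinh.differentiableOn
  · simp only [Real.deriv_sinh]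
    exact Real.differentiable_cosh.differentiableOn
  · intro x hx
    rw [interior_Ici] at hx
    simp only [Function.iterate_succ, Function.iterate_zero, Function.comp_apply, id,
      Real.deriv_sinh, Real.deriv_cosh]
    exact sinh_nonneg' hx.le

lemma sinh_mul_le {t y : ℝ} (ht0 : 0 ≤ t) (ht1 : t ≤ 1) (hy : 0 ≤ y) :
    Real.sinh (t * y) ≤ t * Real.sinh y := by
  have := sinh_convexOn.2 (Set.self_mem_Ici) (Set.mem_Ici.2 hy)
    (by linarith : (0:ℝ) ≤ 1 - t) ht0 (by ring)
  simpa [Real.sinh_zero] using this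

lemma cosh_sub_one (x : ℝ) : Real.cosh x - 1 = 2 * Real.sinh (x / 2) ^ 2 := by
  have := Real.cosh_two_mul (x / 2)
  have h2 : 2 * (x / 2) = x := by ring
  rw [h2] at this
  rw [this, Real.cosh_sq]
  ring

theorem cosh_lipschitz_estimate (κ a b ρ s : ℝ) (hκ : 0 ≤ κ)
    (hab : |b - a| ≤ κ * ρ) (hρ : 0 < ρ) (hρs : ρ ≤ s) :
    Real.cosh ((b - a) / 2) - 1 ≤ (ρ ^ 2 / s ^ 2) * (Real.cosh (κ * s / 2) - 1) := by
  have hs : 0 < s := lt_of_lt_of_le hρ hρs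
  rw [← Real.cosh_abs ((b-a)/2), cosh_sub_one, cosh_sub_one]
  have habs : |(b - a) / 2| / 2 = |b - a| / 4 := by
    rw [abs_div, abs_two]; ring
  rw [habs]
  have h1 : Real.sinh (|b - a| / 4) ≤ Real.sinh ((ρ/s) * (κ * s / 2 / 2)) := by
    apply Real.sinh_le_sinh.2
    have : (ρ/s) * (κ * s / 2 / 2) = κ * ρ / 4 := by field_simp; ring
    rw [this]
    linarith
  have h2 : Real.sinh ((ρ/s) * (κ * s / 2 / 2)) ≤ (ρ/s) * Real.sinh (κ * s / 2 / 2) := by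
    apply sinh_mul_le (by positivity) (by rw [div_le_one hs]; exact hρs)
    positivity
  have h3 : 0 ≤ Real.sinh (|b - a| / 4) := sinh_nonneg' (by positivity)
  have h4 : Real.sinh (|b - a| / 4) ≤ (ρ/s) * Real.sinh (κ * s / 2 / 2) := h1.trans h2
  have h5 : Real.sinh (|b - a| / 4) ^ 2 ≤ ((ρ/s) * Real.sinh (κ * s / 2 / 2)) ^ 2 := by
    apply sq_le_sq' (by linarith) h4
  calc 2 * Real.sinh (|b - a| / 4) ^ 2 ≤ 2 * ((ρ/s) * Real.sinh (κ * s / 2 / 2)) ^ 2 := by linarith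
    _ = ρ ^ 2 / s ^ 2 * (2 * Real.sinh (κ * s / 2 / 2) ^ 2) := by
        field_simp
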